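/- arXiv:1305.5797 — 4 statements merged into one kernel-verified Lean document; each statement's English description precedes it below -/
import Mathlib

section
/- If Q is Lipschitz equicontinuous and has the shrinking property, then Q is weakly contracting. -/
open MeasureTheory ProbabilityTheory Filter Topology

/-- The oscillation of `u` over a set `E`: `sup {u x - u y : x, y ∈ E}`. -/
noncomputable def oscOn {K : Type*} (u : K → ℝ) (E : Set K) : ℝ :=
  sSup {d : ℝ | ∃ x ∈ E, ∃ y ∈ E, d = u x - u y}

/-- The oscillation of `u` over the whole space. -/
noncomputable def osc {K : Type*} (u : K → ℝ) : ℝ :=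
  oscOn u Set.univ

/-- The (smallest) Lipschitz constant `γ(u)` of `u`. -/
noncomputable def lipConst {K : Type*} [MetricSpace K] (u : K → ℝ) : ℝ :=
  sInf {c : ℝ | 0 ≤ c ∧ ∀ x y, |u x - u y| ≤ c * dist x y}

/-- `u ∈ Lip[K]`: `u` is bounded and Lipschitz continuous. -/
def MemLip {K : Type*} [MetricSpace K] (u : K → ℝ) : Prop :=
  (∃ C : ℝ, ∀ x, |u x| ≤ C) ∧ (∃ c : ℝ, 0 ≤ c ∧ ∀ x y, |u x - u y| ≤ c * dist x y)

/-- `u ∈ Lip₁[K]`: `u` is bounded and Lipschitz with constant at most `1`. -/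
def MemLip1 {K : Type*} [MetricSpace K] (u : K → ℝ) : Prop :=
  (∃ C : ℝ, ∀ x, |u x| ≤ C) ∧ ∀ x y, |u x - u y| ≤ dist x y

/-- Iterates of a Markov kernel: `kiter Q 0 = id`, `kiter Q (n+1) = Q ∘ₖ kiter Q n`, so that
`kiter Q n x = Qⁿ(x, ·)`. -/
noncomputable def kiter {K : Type*} [MeasurableSpace K] (Q : Kernel K K) : ℕ → Kernel K K
  | 0 => Kernel.id
  | n + 1 => Q ∘ₖ kiter Q n

/-- The `n`-step transition operator `Tⁿu(x) = ∫_K u(y) Qⁿ(x, dy)`. -/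
noncomputable def Tn {K : Type*} [MeasurableSpace K] (Q : Kernel K K) (n : ℕ)
    (u : K → ℝ) (x : K) : ℝ :=
  ∫ y, u y ∂(kiter Q n x)

/-- `Q` is Lipschitz equicontinuous: there is `C > 0` with `γ(Tⁿu) ≤ C γ(u)` for
all `n ≥ 1` and all bounded Lipschitz `u`. -/
def LipEquicont {K : Type*} [MetricSpace K] [MeasurableSpace K] (Q : Kernel K K) : Prop :=
  ∃ C : ℝ, 0 < C ∧ ∀ n : ℕ, 1 ≤ n → ∀ u : K → ℝ, MemLip u →
    lipConst (Tn Q n u) ≤ C * lipConst u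

/-- `Q` has the shrinking property. -/
def ShrinkingProperty {K : Type*} [MetricSpace K] [MeasurableSpace K] (Q : Kernel K K) : Prop :=
  ∀ ρ : ℝ, 0 < ρ → ∃ α : ℝ, 0 < α ∧ α < 1 ∧
    ∀ E : Set K, E.Nonempty → IsCompact E → ∀ η : ℝ, 0 < η → ∀ κ : ℝ, 0 < κ →
      ∃ N : ℕ, ∃ F : Set K, F.Nonempty ∧ IsCompact F ∧
        ∀ n : ℕ, N ≤ n → ∀ u : K → ℝ, MemLip u →
          oscOn (Tn Q n u) E ≤
            η * lipConst u + κ * osc u + α * ρ * lipConst u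
              + (1 - α) * oscOn (Tn Q (n - N) u) F

/-- `Q` has the strong shrinking property. -/
def StrongShrinkingProperty {K : Type*} [MetricSpace K] [MeasurableSpace K]
    (Q : Kernel K K) : Prop :=
  ∀ ρ : ℝ, 0 < ρ → ∃ α : ℝ, 0 < α ∧ α < 1 ∧ ∃ N : ℕ,
    ∀ n : ℕ, N ≤ n → ∀ u : K → ℝ, MemLip u →
      osc (Tn Q n u) ≤ α * ρ * lipConst u + (1 - α) * osc (Tn Q (n - N) u)

/-- `Q` is weakly contracting: for all `x, y`,
`sup {∫ u dQⁿ(x,·) − ∫ u dQⁿ(y,·) : u ∈ Lip₁[K]} → 0`. -/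
def WeaklyContracting {K : Type*} [MetricSpace K] [MeasurableSpace K] (Q : Kernel K K) : Prop :=
  ∀ x y : K,
    Filter.Tendsto
      (fun n : ℕ => sSup {d : ℝ | ∃ u : K → ℝ, MemLip1 u ∧ d = Tn Q n u x - Tn Q n u y})
      Filter.atTop (nhds 0)

/-- `Q` is weakly ergodic: weakly contracting, and there is a probability measure `π` with
`∫ u dQⁿ(x,·) → ∫ u dπ` for every bounded continuous `u` and every `x`. -/
def WeaklyErgodic {K : Type*} [MetricSpace K] [MeasurableSpace K] (Q : Kernel K K) : Prop :=
  WeaklyContracting Q ∧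
    ∃ π : Measure K, IsProbabilityMeasure π ∧
      ∀ u : K → ℝ, Continuous u → (∃ C : ℝ, ∀ x, |u x| ≤ C) →
        ∀ x : K, Filter.Tendsto (fun n : ℕ => Tn Q n u x) Filter.atTop (nhds (∫ y, u y ∂π))

section MyAux

variable {K : Type*} [MetricSpace K] [MeasurableSpace K] [BorelSpace K]

lemma my_lipConst_nonneg (u : K → ℝ) (hu : MemLip u) : 0 ≤ lipConst u :=
  le_csInf hu.2 fun _ hc => hc.1

lemma my_lipConst_spec (u : K → ℝ) (hu : MemLip u) (x y : K) :
    |u x - u y| ≤ lipConst u * dist x y := by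
  refine le_of_forall_pos_le_add fun ε hε => ?_
  rcases eq_or_lt_of_le (dist_nonneg (x := x) (y := y)) with hd | hd
  · obtain ⟨c, hc0, hc⟩ := hu.2
    have h := hc x y
    rw [← hd] at h ⊢
    simp only [mul_zero] at h ⊢
    linarith
  · have hlt : sInf {c : ℝ | 0 ≤ c ∧ ∀ x y, |u x - u y| ≤ c * dist x y}
        < lipConst u + ε / dist x y := by
      have : 0 < ε / dist x y := div_pos hε hd
      unfold lipConst
      linarith
    obtain ⟨c, hcS, hclt⟩ := exists_lt_of_csInf_lt hu.2 hlt
    have h := hcS.2 x y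
    have : c * dist x y ≤ (lipConst u + ε / dist x y) * dist x y :=
      mul_le_mul_of_nonneg_right hclt.le hd.le
    have hεd : ε / dist x y * dist x y = ε := div_mul_cancel₀ ε hd.ne'
    nlinarith

lemma my_memLip_of_memLip1 (u : K → ℝ) (hu : MemLip1 u) : MemLip u :=
  ⟨hu.1, 1, zero_le_one, fun x y => by simpa using hu.2 x y⟩

lemma my_lipConst_le_one (u : K → ℝ) (hu : MemLip1 u) : lipConst u ≤ 1 :=
  csInf_le ⟨0, fun _ hc => hc.1⟩ ⟨zero_le_one, fun x y => by simpa using hu.2 x y⟩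

lemma my_memLip_continuous (u : K → ℝ) (hu : MemLip u) : Continuous u := by
  obtain ⟨c, hc0, hc⟩ := hu.2
  exact (LipschitzWith.of_dist_le_mul (K := ⟨c, hc0⟩) fun x y => by
    rw [Real.dist_eq]; exact hc x y).continuous

lemma my_memLip_integrable (u : K → ℝ) (hu : MemLip u) (μ : Measure K)
    [IsFiniteMeasure μ] : Integrable u μ := by
  obtain ⟨C, hC⟩ := hu.1
  refine ⟨(my_memLip_continuous u hu).measurable.aestronglyMeasurable, ?_⟩
  exact MeasureTheory.HasFiniteIntegral.of_bounded (C := C)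
    (Filter.Eventually.of_forall fun a => by simpa [Real.norm_eq_abs] using hC a)

lemma my_bddAbove_oscSet (u : K → ℝ) (hu : MemLip u) (E : Set K) :
    BddAbove {d : ℝ | ∃ x ∈ E, ∃ y ∈ E, d = u x - u y} := by
  obtain ⟨C, hC⟩ := hu.1
  refine ⟨C + C, ?_⟩
  rintro d ⟨a, -, b, -, rfl⟩
  have h1 := abs_le.1 (hC a)
  have h2 := abs_le.1 (hC b)
  have : u a - u b ≤ C + C := by linarith [h1.2, h2.1]
  exact this

lemma my_osc_nonneg (u : K → ℝ) (hu : MemLip u) (x : K) : 0 ≤ osc u := by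
  have : (0 : ℝ) ∈ {d : ℝ | ∃ a ∈ (Set.univ : Set K), ∃ b ∈ (Set.univ : Set K),
      d = u a - u b} := ⟨x, trivial, x, trivial, by ring⟩
  exact le_csSup (my_bddAbove_oscSet u hu _) this

lemma my_osc_le (u : K → ℝ) (hu : MemLip u) (x₀ : K)
    (hbdd : Bornology.IsBounded (Set.univ : Set K)) :
    osc u ≤ lipConst u * Metric.diam (Set.univ : Set K) := by
  refine csSup_le ⟨0, x₀, trivial, x₀, trivial, by ring⟩ ?_
  rintro d ⟨a, -, b, -, rfl⟩
  have h1 : u a - u b ≤ |u a - u b| := le_abs_self _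
  have h2 := my_lipConst_spec u hu a b
  have h3 : dist a b ≤ Metric.diam (Set.univ : Set K) :=
    Metric.dist_le_diam_of_mem hbdd trivial trivial
  have h4 : lipConst u * dist a b ≤ lipConst u * Metric.diam (Set.univ : Set K) :=
    mul_le_mul_of_nonneg_left h3 (my_lipConst_nonneg u hu)
  linarith

lemma my_integral_diff_le_osc (u : K → ℝ) (hu : MemLip u)
    (μ ν : Measure K) [IsProbabilityMeasure μ] [IsProbabilityMeasure ν] :
    (∫ a, u a ∂μ) - ∫ a, u a ∂ν ≤ osc u := by
  have hbdd := my_bddAbove_oscSet u hu (Set.univ : Set K)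
  have h1 : ∀ b : K, (∫ a, u a ∂μ) - u b ≤ osc u := by
    intro b
    have hmono : ∫ a, u a ∂μ ≤ ∫ _a, (u b + osc u) ∂μ := by
      refine integral_mono (my_memLip_integrable u hu μ) (integrable_const _) fun a => ?_
      have : u a - u b ≤ osc u := le_csSup hbdd ⟨a, trivial, b, trivial, rfl⟩
      linarith
    rw [integral_const] at hmono
    simp only [probReal_univ, one_smul] at hmono
    linarith
  have h2 : ∫ _b, ((∫ a, u a ∂μ) - osc u) ∂ν ≤ ∫ b, u b ∂ν := by
    refine integral_mono (integrable_const _) (my_memLip_integrable u hu ν) fun b => ?_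
    linarith [h1 b]
  rw [integral_const] at h2
  simp only [probReal_univ, one_smul] at h2
  linarith

lemma my_kiter_markov (Q : Kernel K K) [IsMarkovKernel Q] (n : ℕ) :
    IsMarkovKernel (kiter Q n) := by
  induction n with
  | zero => rw [kiter]; infer_instance
  | succ n ih => rw [kiter]; infer_instance

lemma my_Tn_diff_le_osc (Q : Kernel K K) [IsMarkovKernel Q] (n : ℕ)
    (u : K → ℝ) (hu : MemLip u) (a b : K) :
    Tn Q n u a - Tn Q n u b ≤ osc u := by
  haveI := my_kiter_markov Q n
  exact my_integral_diff_le_osc u hu (kiter Q n a) (kiter Q n b)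

lemma my_oscOn_Tn_le_osc (Q : Kernel K K) [IsMarkovKernel Q] (n : ℕ)
    (u : K → ℝ) (hu : MemLip u) (F : Set K) (hF : F.Nonempty) :
    oscOn (Tn Q n u) F ≤ osc u := by
  obtain ⟨z, hz⟩ := hF
  refine csSup_le ⟨0, z, hz, z, hz, by ring⟩ ?_
  rintro d ⟨a, -, b, -, rfl⟩
  exact my_Tn_diff_le_osc Q n u hu a b

lemma my_key {K : Type*} [MetricSpace K] [MeasurableSpace K] [BorelSpace K] [Nonempty K]
    (hbdd : Bornology.IsBounded (Set.univ : Set K))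
    (Q : Kernel K K) [IsMarkovKernel Q] (hshrink : ShrinkingProperty Q)
    (ε : ℝ) (hε : 0 < ε) (E : Set K) (hE : E.Nonempty) (hEc : IsCompact E) :
    ∃ M : ℕ, ∀ n ≥ M, ∀ u : K → ℝ, MemLip u → lipConst u ≤ 1 →
      oscOn (Tn Q n u) E ≤ ε := by
  obtain ⟨x₀⟩ := ‹Nonempty K›
  set D := Metric.diam (Set.univ : Set K) with hDdef
  have hD : 0 ≤ D := Metric.diam_nonneg
  obtain ⟨α, hα0, hα1, hsh⟩ := hshrink (ε / 4) (by linarith)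
  set η := α * ε / 4 with hηdef
  have hη : 0 < η := by positivity
  set κ := α * ε / (4 * (D + 1)) with hκdef
  have hDp : (0:ℝ) < 4 * (D + 1) := by linarith
  have hκ : 0 < κ := div_pos (by positivity) hDp
  set G := ε / 4 + ε * D / (4 * (D + 1)) + ε / 4 with hGdef
  have hG0 : 0 ≤ G := by
    have : 0 ≤ ε * D / (4 * (D + 1)) := div_nonneg (by positivity) hDp.le
    rw [hGdef]; linarith
  have hGle : G ≤ 3 * ε / 4 := by
    have h1 : ε * D / (4 * (D + 1)) ≤ ε / 4 := by
      rw [div_le_div_iff₀ hDp (by norm_num)]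
      nlinarith
    rw [hGdef]; linarith
  have hβ : η + κ * D + α * (ε / 4) = α * G := by
    rw [hηdef, hκdef, hGdef]
    field_simp
  clear_value η κ G
  have main : ∀ k : ℕ, ∀ E' : Set K, E'.Nonempty → IsCompact E' →
      ∃ M : ℕ, ∀ n ≥ M, ∀ u : K → ℝ, MemLip u → lipConst u ≤ 1 →
        oscOn (Tn Q n u) E' ≤ G + (1 - α) ^ k * D := by
    intro k
    induction k with
    | zero =>
      intro E' hE' _
      refine ⟨0, fun n _ u hu hl => ?_⟩
      have h1 : oscOn (Tn Q n u) E' ≤ osc u := my_oscOn_Tn_le_osc Q n u hu E' hE'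
      have h2 : osc u ≤ lipConst u * D := my_osc_le u hu x₀ hbdd
      have h3 : lipConst u * D ≤ 1 * D := mul_le_mul_of_nonneg_right hl hD
      simp only [pow_zero]
      linarith
    | succ k ih =>
      intro E' hE' hE'c
      obtain ⟨N, F, hFne, hFc, hN⟩ := hsh E' hE' hE'c η hη κ hκ
      obtain ⟨M, hM⟩ := ih F hFne hFc
      refine ⟨N + M, fun n hn u hu hl => ?_⟩
      have hnN : N ≤ n := le_trans (Nat.le_add_right _ _) hn
      have h0 := hN n hnN u hu
      have hlip0 : 0 ≤ lipConst u := my_lipConst_nonneg u hu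
      have hoscD : osc u ≤ D := by
        have h2 : osc u ≤ lipConst u * D := my_osc_le u hu x₀ hbdd
        nlinarith
      have hrec : oscOn (Tn Q (n - N) u) F ≤ G + (1 - α) ^ k * D :=
        hM (n - N) (Nat.le_sub_of_add_le (by omega)) u hu hl
      have h1a : (0:ℝ) ≤ 1 - α := by linarith
      have e1 : η * lipConst u ≤ η := by nlinarith
      have e2 : κ * osc u ≤ κ * D := mul_le_mul_of_nonneg_left hoscD hκ.le
      have e3 : α * (ε / 4) * lipConst u ≤ α * (ε / 4) := by nlinarith
      have e4 : (1 - α) * oscOn (Tn Q (n - N) u) F ≤ (1 - α) * (G + (1 - α) ^ k * D) :=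
        mul_le_mul_of_nonneg_left hrec h1a
      have heq : η + κ * D + α * (ε / 4) + (1 - α) * (G + (1 - α) ^ k * D)
          = G + (1 - α) ^ (k + 1) * D := by
        rw [pow_succ]
        linear_combination hβ
      linarith
  obtain ⟨k, hk⟩ : ∃ k : ℕ, (1 - α) ^ k * D ≤ ε / 4 := by
    obtain ⟨k, hk⟩ := exists_pow_lt_of_lt_one (show (0:ℝ) < ε / (4 * (D + 1)) from
      div_pos hε hDp) (show 1 - α < 1 by linarith)
    refine ⟨k, ?_⟩
    have h1 : (1 - α) ^ k * (4 * (D + 1)) < ε := (lt_div_iff₀ hDp).mp hk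
    have h2 : (0:ℝ) ≤ (1 - α) ^ k := pow_nonneg (by linarith) k
    nlinarith
  obtain ⟨M, hM⟩ := main k E hE hEc
  refine ⟨M, fun n hn u hu hl => ?_⟩
  have := hM n hn u hu hl
  linarith

end MyAux

/-- If `Q` is Lipschitz equicontinuous and has the shrinking property,
then `Q` is weakly contracting. -/
theorem stmt_1 {K : Type*} [MetricSpace K] [CompleteSpace K]
    [TopologicalSpace.SeparableSpace K] [MeasurableSpace K] [BorelSpace K]
    (hbdd : Bornology.IsBounded (Set.univ : Set K))
    (Q : Kernel K K) [IsMarkovKernel Q]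
    (hlip : LipEquicont Q) (hshrink : ShrinkingProperty Q) :
    WeaklyContracting Q := by
  intro x y
  haveI : Nonempty K := ⟨x⟩
  set D := Metric.diam (Set.univ : Set K) with hDdef
  have hD : 0 ≤ D := Metric.diam_nonneg
  set S : ℕ → Set ℝ := fun n =>
    {d : ℝ | ∃ u : K → ℝ, MemLip1 u ∧ d = Tn Q n u x - Tn Q n u y} with hSdef
  have hzero : ∀ n, (0:ℝ) ∈ S n := by
    intro n
    refine ⟨fun _ => 0, ⟨⟨0, fun a => by simp⟩, fun a b => by simp [dist_nonneg]⟩, ?_⟩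
    simp [Tn]
  have hbddS : ∀ n, BddAbove (S n) := by
    intro n
    refine ⟨D, ?_⟩
    rintro d ⟨u, hu1, rfl⟩
    have hu := my_memLip_of_memLip1 u hu1
    have h1 : Tn Q n u x - Tn Q n u y ≤ osc u := my_Tn_diff_le_osc Q n u hu x y
    have h2 : osc u ≤ lipConst u * D := my_osc_le u hu x hbdd
    have h3 : lipConst u * D ≤ 1 * D :=
      mul_le_mul_of_nonneg_right (my_lipConst_le_one u hu1) hD
    have : Tn Q n u x - Tn Q n u y ≤ D := by linarith
    exact this
  rw [Metric.tendsto_atTop]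
  intro ε hε
  obtain ⟨M, hM⟩ := my_key hbdd Q hshrink (ε / 2) (by linarith) {x, y}
    ⟨x, by simp⟩ (((Set.finite_singleton y).insert x).isCompact)
  refine ⟨M, fun n hn => ?_⟩
  have hub : sSup (S n) ≤ ε / 2 := by
    refine csSup_le ⟨0, hzero n⟩ ?_
    rintro d ⟨u, hu1, rfl⟩
    have hu := my_memLip_of_memLip1 u hu1
    have hmem : Tn Q n u x - Tn Q n u y ∈
        {d : ℝ | ∃ a ∈ ({x, y} : Set K), ∃ b ∈ ({x, y} : Set K),
          d = Tn Q n u a - Tn Q n u b} :=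
      ⟨x, by simp, y, by simp, rfl⟩
    have hbddOsc : BddAbove {d : ℝ | ∃ a ∈ ({x, y} : Set K), ∃ b ∈ ({x, y} : Set K),
        d = Tn Q n u a - Tn Q n u b} := by
      refine ⟨osc u, ?_⟩
      rintro d ⟨a, -, b, -, rfl⟩
      exact my_Tn_diff_le_osc Q n u hu a b
    have h1 : Tn Q n u x - Tn Q n u y ≤ oscOn (Tn Q n u) {x, y} := le_csSup hbddOsc hmem
    have h2 := hM n hn u hu (my_lipConst_le_one u hu1)
    linarith
  have hlb : 0 ≤ sSup (S n) := le_csSup (hbddS n) (hzero n)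
  rw [Real.dist_eq, sub_zero, abs_of_nonneg hlb]
  linarith
end

section
/- If Q is Lipschitz equicontinuous, has the shrinking property, and there exists a probability measure μ on (K, 𝓔) that is invariant under Q (i.e. ∫_K Q(x, E) μ(dx) = μ(E) for every E ∈ 𝓔), then Q is weakly ergodic. -/
set_option linter.unusedSectionVars false
set_option linter.unusedVariables false
set_option maxHeartbeats 1000000


open MeasureTheory ProbabilityTheory Filter Topology

/-! ### Auxiliary lemmas -/

open scoped NNReal ENNReal

section OscLemmas

variable {K : Type*} [MetricSpace K]

lemma oscOn_le' {u : K → ℝ} {E : Set K} (hE : E.Nonempty) {c : ℝ}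
    (h : ∀ a ∈ E, ∀ b ∈ E, u a - u b ≤ c) : oscOn u E ≤ c := by
  obtain ⟨a, ha⟩ := hE
  exact csSup_le ⟨u a - u a, a, ha, a, ha, rfl⟩
    (by rintro d ⟨p, hp, q, hq, rfl⟩; exact h p hp q hq)

lemma le_oscOn' {u : K → ℝ} {E : Set K} {c : ℝ}
    (h : ∀ a ∈ E, ∀ b ∈ E, u a - u b ≤ c) {a b : K} (ha : a ∈ E) (hb : b ∈ E) :
    u a - u b ≤ oscOn u E :=
  le_csSup ⟨c, by rintro d ⟨p, hp, q, hq, rfl⟩; exact h p hp q hq⟩ ⟨a, ha, b, hb, rfl⟩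

lemma oscOn_nonneg' {u : K → ℝ} {E : Set K} (hE : E.Nonempty) {c : ℝ}
    (h : ∀ a ∈ E, ∀ b ∈ E, u a - u b ≤ c) : 0 ≤ oscOn u E := by
  obtain ⟨a, ha⟩ := hE
  simpa using le_oscOn' h ha ha

lemma MemLip1.memLip {u : K → ℝ} (h : MemLip1 u) : MemLip u :=
  ⟨h.1, 1, zero_le_one, by simpa using h.2⟩

lemma MemLip1.continuous {u : K → ℝ} (h : MemLip1 u) : Continuous u := by
  have : LipschitzWith 1 u := LipschitzWith.of_dist_le_mul (by
    intro x y; rw [Real.dist_eq]; simpa using h.2 x y)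
  exact this.continuous

lemma MemLip.continuous {u : K → ℝ} (h : MemLip u) : Continuous u := by
  obtain ⟨c, hc0, hc⟩ := h.2
  have : LipschitzWith c.toNNReal u := LipschitzWith.of_dist_le_mul (by
    intro x y; rw [Real.dist_eq, Real.coe_toNNReal c hc0]; exact hc x y)
  exact this.continuous

lemma lipConst_nonneg' (u : K → ℝ) : 0 ≤ lipConst u :=
  Real.sInf_nonneg (fun _ hx => hx.1)

lemma MemLip1.lipConst_le_one {u : K → ℝ} (h : MemLip1 u) : lipConst u ≤ 1 := by
  apply csInf_le
  · exact ⟨0, fun c hc => hc.1⟩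
  · exact ⟨zero_le_one, by simpa using h.2⟩

lemma abs_min_sub_min_le' (c x y : ℝ) : |min c x - min c y| ≤ |x - y| := by
  rcases le_total c x with h1 | h1 <;> rcases le_total c y with h2 | h2
  · simp [min_eq_left h1, min_eq_left h2, abs_nonneg]
  · rw [min_eq_left h1, min_eq_right h2, abs_le]
    constructor <;> nlinarith [le_abs_self (x - y), neg_abs_le (x - y)]
  · rw [min_eq_right h1, min_eq_left h2, abs_le]
    constructor <;> nlinarith [le_abs_self (x - y), neg_abs_le (x - y)]
  · rw [min_eq_right h1, min_eq_right h2]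

end OscLemmas

section MeasAux

variable {K : Type*} [MetricSpace K] [MeasurableSpace K] [BorelSpace K]

lemma MemLip.measurable {u : K → ℝ} (h : MemLip u) : Measurable u :=
  h.continuous.measurable

instance kiter_markov (Q : Kernel K K) [IsMarkovKernel Q] (n : ℕ) :
    IsMarkovKernel (kiter Q n) := by
  induction n with
  | zero => rw [kiter]; infer_instance
  | succ n ih => rw [kiter]; infer_instance

lemma integrable_of_bounded {u : K → ℝ} (hu : Measurable u) {C : ℝ}
    (hC : ∀ z, |u z| ≤ C) (ν : Measure K) [IsFiniteMeasure ν] : Integrable u ν := by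
  refine (integrable_const C).mono' hu.aestronglyMeasurable ?_
  exact Eventually.of_forall (fun z => by simpa [Real.norm_eq_abs] using hC z)

lemma abs_integral_le' {u : K → ℝ} {C : ℝ}
    (hC : ∀ z, |u z| ≤ C) (ν : Measure K) [IsProbabilityMeasure ν] :
    |∫ y, u y ∂ν| ≤ C := by
  have := norm_integral_le_of_norm_le_const (μ := ν) (f := u) (C := C)
    (Eventually.of_forall (fun z => by simpa [Real.norm_eq_abs] using hC z))
  simpa [Real.norm_eq_abs] using this

lemma abs_integral_sub_le' {u : K → ℝ} (hu : Measurable u) {C : ℝ} (hC : ∀ z, |u z| ≤ C)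
    {D : ℝ} (z : K) (hD : ∀ s, |u s - u z| ≤ D) (ν : Measure K) [IsProbabilityMeasure ν] :
    |(∫ y, u y ∂ν) - u z| ≤ D := by
  have hint : Integrable u ν := integrable_of_bounded hu hC ν
  have heq : (∫ y, u y ∂ν) - u z = ∫ y, (u y - u z) ∂ν := by
    rw [integral_sub hint (integrable_const _), integral_const]
    simp
  rw [heq]
  exact abs_integral_le' hD ν

lemma tn_abs_le (Q : Kernel K K) [IsMarkovKernel Q] (n : ℕ) {u : K → ℝ}
    {C : ℝ} (hC : ∀ z, |u z| ≤ C) (x : K) :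
    |Tn Q n u x| ≤ C :=
  abs_integral_le' hC _

lemma tn_diff_le (Q : Kernel K K) [IsMarkovKernel Q] (n : ℕ) {u : K → ℝ}
    (hu : Measurable u) {C : ℝ} (hC : ∀ z, |u z| ≤ C)
    {D : ℝ} (hD : ∀ a b, |u a - u b| ≤ D) (x y : K) :
    |Tn Q n u x - Tn Q n u y| ≤ 2 * D := by
  have h1 : |Tn Q n u x - u x| ≤ D := abs_integral_sub_le' hu hC x (fun s => hD s x) _
  have h2 : |Tn Q n u y - u x| ≤ D := abs_integral_sub_le' hu hC x (fun s => hD s x) _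
  calc |Tn Q n u x - Tn Q n u y| = |(Tn Q n u x - u x) - (Tn Q n u y - u x)| := by ring_nf
    _ ≤ |Tn Q n u x - u x| + |Tn Q n u y - u x| := abs_sub _ _
    _ ≤ 2 * D := by linarith

lemma tn_measurable (Q : Kernel K K) [IsMarkovKernel Q] (n : ℕ) {u : K → ℝ}
    (hu : Measurable u) : Measurable (Tn Q n u) := by
  have h : StronglyMeasurable (Function.uncurry fun (_ : K) (y : K) => u y) :=
    (hu.comp measurable_snd).stronglyMeasurable
  exact (MeasureTheory.StronglyMeasurable.integral_kernel_prod_right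
    (κ := kiter Q n) h).measurable

lemma kiter_invariant (Q : Kernel K K) [IsMarkovKernel Q] {μ : Measure K}
    (hinv : ∀ E : Set K, MeasurableSet E → ∫⁻ x, Q x E ∂μ = μ E) (n : ℕ) :
    μ.bind (kiter Q n) = μ := by
  have hQ : Kernel.Invariant Q μ := by
    ext E hE
    rw [Measure.bind_apply hE (Kernel.measurable Q).aemeasurable]
    exact hinv E hE
  induction n with
  | zero =>
    rw [kiter]
    have h : ⇑(Kernel.id : Kernel K K) = Measure.dirac :=
      funext fun a => Kernel.id_apply a
    rw [h]
    exact Measure.bind_dirac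
  | succ n ih =>
    rw [kiter]
    exact Kernel.Invariant.comp hQ ih

lemma integral_tn_eq (Q : Kernel K K) [IsMarkovKernel Q] (n : ℕ) (μ : Measure K)
    [IsProbabilityMeasure μ] (hbind : μ.bind (kiter Q n) = μ) {u : K → ℝ}
    (hu : Measurable u) {C : ℝ} (hC : ∀ z, |u z| ≤ C) :
    ∫ x, Tn Q n u x ∂μ = ∫ y, u y ∂μ := by
  set κ := kiter Q n with hκ
  have hmap : μ.bind ⇑κ = (μ ⊗ₘ κ).map Prod.snd := by
    ext s hs
    rw [Measure.map_apply measurable_snd hs, Measure.bind_apply hs (Kernel.measurable κ).aemeasurable,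
      Measure.compProd_apply (measurable_snd hs)]
    apply lintegral_congr
    intro a
    have hpre : (Prod.mk a ⁻¹' (Prod.snd ⁻¹' s)) = s := by ext z; simp
    rw [hpre]
  have hint : Integrable (fun p : K × K => u p.2) (μ ⊗ₘ κ) := by
    refine (integrable_const C).mono' (hu.comp measurable_snd).aestronglyMeasurable ?_
    exact Eventually.of_forall fun p => by simpa [Real.norm_eq_abs] using hC p.2
  calc ∫ x, Tn Q n u x ∂μ = ∫ x, ∫ y, u y ∂(κ x) ∂μ := rfl
    _ = ∫ p : K × K, u p.2 ∂(μ ⊗ₘ κ) := (Measure.integral_compProd hint).symm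
    _ = ∫ y, u y ∂((μ ⊗ₘ κ).map Prod.snd) := by
        rw [integral_map measurable_snd.aemeasurable hu.aestronglyMeasurable]
    _ = ∫ y, u y ∂μ := by rw [← hmap, hbind]

end MeasAux

section Core

variable {K : Type*} [MetricSpace K] [MeasurableSpace K] [BorelSpace K]

lemma lip1_bound {u : K → ℝ} (h : MemLip1 u) {D : ℝ} (hD : ∀ a b : K, dist a b ≤ D) :
    ∀ a b : K, |u a - u b| ≤ D := fun a b => (h.2 a b).trans (hD a b)

lemma osc_le_two_D {u : K → ℝ} (h : MemLip1 u) {D : ℝ} (hD : ∀ a b : K, dist a b ≤ D)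
    (x₀ : K) : osc u ≤ 2 * D := by
  have hD0 : 0 ≤ D := le_trans dist_nonneg (hD x₀ x₀)
  rw [osc]
  refine oscOn_le' ⟨x₀, Set.mem_univ x₀⟩ (fun a _ b _ => ?_)
  have := (le_abs_self (u a - u b)).trans (lip1_bound h hD a b)
  linarith

lemma oscOn_tn_le (Q : Kernel K K) [IsMarkovKernel Q] {u : K → ℝ} (h : MemLip1 u)
    {D : ℝ} (hD : ∀ a b : K, dist a b ≤ D) {E : Set K} (hE : E.Nonempty) (n : ℕ) :
    oscOn (Tn Q n u) E ≤ 2 * D := by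
  obtain ⟨C, hC⟩ := h.1
  refine oscOn_le' hE (fun a _ b _ => ?_)
  exact (le_abs_self _).trans
    (tn_diff_le Q n h.memLip.measurable hC (lip1_bound h hD) a b)

lemma tn_diff_le_oscOn (Q : Kernel K K) [IsMarkovKernel Q] {u : K → ℝ} (h : MemLip1 u)
    {D : ℝ} (hD : ∀ a b : K, dist a b ≤ D) {E : Set K} {a b : K}
    (ha : a ∈ E) (hb : b ∈ E) (n : ℕ) :
    Tn Q n u a - Tn Q n u b ≤ oscOn (Tn Q n u) E := by
  obtain ⟨C, hC⟩ := h.1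
  refine le_oscOn' (c := 2 * D) (fun p _ q _ => ?_) ha hb
  exact (le_abs_self _).trans
    (tn_diff_le Q n h.memLip.measurable hC (lip1_bound h hD) p q)

lemma oscOn_tn_nonneg (Q : Kernel K K) [IsMarkovKernel Q] {u : K → ℝ} (h : MemLip1 u)
    {D : ℝ} (hD : ∀ a b : K, dist a b ≤ D) {E : Set K} (hE : E.Nonempty) (n : ℕ) :
    0 ≤ oscOn (Tn Q n u) E := by
  obtain ⟨C, hC⟩ := h.1
  refine oscOn_nonneg' hE (c := 2 * D) (fun p _ q _ => ?_)
  exact (le_abs_self _).trans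
    (tn_diff_le Q n h.memLip.measurable hC (lip1_bound h hD) p q)

/-- The core estimate: under the shrinking property, `Tⁿu(x) − Tⁿu(y)` becomes uniformly
small over `u ∈ Lip₁`. -/
lemma core_estimate (Q : Kernel K K) [IsMarkovKernel Q] (hshrink : ShrinkingProperty Q)
    {D : ℝ} (hD : ∀ a b : K, dist a b ≤ D) (x y : K) {ε : ℝ} (hε : 0 < ε) :
    ∃ M : ℕ, ∀ n, M ≤ n → ∀ u : K → ℝ, MemLip1 u → Tn Q n u x - Tn Q n u y ≤ ε := by
  have hD0 : 0 ≤ D := le_trans dist_nonneg (hD x x)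
  obtain ⟨α, hα0, hα1, hsh⟩ := hshrink (ε / 4) (by positivity)
  obtain ⟨η, hηdef⟩ : ∃ η : ℝ, η = α * ε / 8 := ⟨_, rfl⟩
  obtain ⟨κ, hκdef⟩ : ∃ κ : ℝ, κ = α * ε / (8 * (2 * D + 1)) := ⟨_, rfl⟩
  obtain ⟨c, hcdef⟩ : ∃ c : ℝ, c = η + κ * (2 * D) + α * (ε / 4) := ⟨_, rfl⟩
  have hβ0 : (0:ℝ) ≤ 1 - α := by linarith
  have hηpos : 0 < η := by rw [hηdef]; positivity
  have hκpos : 0 < κ := by rw [hκdef]; positivity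
  have hκ2D : κ * (2 * D) ≤ α * ε / 8 := by
    rw [hκdef, div_mul_eq_mul_div, div_le_div_iff₀ (by positivity) (by norm_num)]
    nlinarith [mul_pos hα0 hε]
  have hcle : c ≤ α * ε / 2 := by rw [hcdef, hηdef]; linarith
  have hc0 : 0 ≤ c := by
    have h1 : 0 ≤ κ * (2 * D) := by positivity
    rw [hcdef]
    nlinarith [hηpos.le, mul_pos hα0 hε]
  have happ : ∀ u : K → ℝ, MemLip1 u →
      η * lipConst u + κ * osc u + α * (ε / 4) * lipConst u ≤ c := by
    intro u hu
    have h1 : lipConst u ≤ 1 := hu.lipConst_le_one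
    have h0 : 0 ≤ lipConst u := lipConst_nonneg' u
    have h2 : osc u ≤ 2 * D := osc_le_two_D hu hD x
    have hαε : (0:ℝ) < α * (ε / 4) := by positivity
    rw [hcdef]
    have e1 : η * lipConst u ≤ η := by nlinarith [hηpos.le]
    have e2 : κ * osc u ≤ κ * (2 * D) := by nlinarith [hκpos.le]
    have e3 : α * (ε / 4) * lipConst u ≤ α * (ε / 4) := by nlinarith [hαε.le]
    linarith
  have main : ∀ k : ℕ, ∃ M : ℕ, ∃ F : Set K, F.Nonempty ∧ IsCompact F ∧
      ∀ n, M ≤ n → ∀ u : K → ℝ, MemLip1 u →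
        oscOn (Tn Q n u) ({x, y} : Set K) ≤
          c * (∑ i ∈ Finset.range k, (1 - α) ^ i)
            + (1 - α) ^ k * oscOn (Tn Q (n - M) u) F := by
    intro k
    induction k with
    | zero =>
      refine ⟨0, {x, y}, ⟨x, by simp⟩, (Set.toFinite _).isCompact, ?_⟩
      intro n _ u _
      simp
    | succ k ih =>
      obtain ⟨M, F, hFne, hFc, hIH⟩ := ih
      obtain ⟨N, F', hF'ne, hF'c, hsh'⟩ := hsh F hFne hFc η hηpos κ hκpos
      refine ⟨M + N, F', hF'ne, hF'c, ?_⟩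
      intro n hn u hu
      have h1 := hIH n (le_trans (Nat.le_add_right M N) hn) u hu
      have h2 := hsh' (n - M) (by omega) u hu.memLip
      have hnm : n - M - N = n - (M + N) := by omega
      rw [hnm] at h2
      have h3 : oscOn (Tn Q (n - M) u) F
          ≤ c + (1 - α) * oscOn (Tn Q (n - (M + N)) u) F' := by
        have h4 := happ u hu
        linarith
      have hβk : (0:ℝ) ≤ (1 - α) ^ k := pow_nonneg hβ0 k
      calc oscOn (Tn Q n u) ({x, y} : Set K)
          ≤ c * (∑ i ∈ Finset.range k, (1 - α) ^ i)
            + (1 - α) ^ k * oscOn (Tn Q (n - M) u) F := h1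
        _ ≤ c * (∑ i ∈ Finset.range k, (1 - α) ^ i)
            + (1 - α) ^ k * (c + (1 - α) * oscOn (Tn Q (n - (M + N)) u) F') := by
            have h5 := mul_le_mul_of_nonneg_left h3 hβk
            linarith
        _ = c * (∑ i ∈ Finset.range (k + 1), (1 - α) ^ i)
            + (1 - α) ^ (k + 1) * oscOn (Tn Q (n - (M + N)) u) F' := by
            rw [Finset.sum_range_succ]; ring
  obtain ⟨k, hk⟩ := exists_pow_lt_of_lt_one
    (x := ε / (2 * (2 * D + 1))) (y := 1 - α) (by positivity) (by linarith)
  obtain ⟨M, F, hFne, hFc, hmain⟩ := main k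
  refine ⟨M, fun n hn u hu => ?_⟩
  have hxy : Tn Q n u x - Tn Q n u y ≤ oscOn (Tn Q n u) ({x, y} : Set K) :=
    tn_diff_le_oscOn Q hu hD (by simp) (by simp) n
  have hβk : (0:ℝ) ≤ (1 - α) ^ k := pow_nonneg hβ0 k
  have hsum0 : (0:ℝ) ≤ ∑ i ∈ Finset.range k, (1 - α) ^ i :=
    Finset.sum_nonneg fun i _ => pow_nonneg hβ0 i
  have hsum : (∑ i ∈ Finset.range k, (1 - α) ^ i) ≤ 1 / α := by
    have hgs := geom_sum_mul (1 - α) k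
    rw [le_div_iff₀ hα0]
    nlinarith [hβk]
  have hc1 : c * (∑ i ∈ Finset.range k, (1 - α) ^ i) ≤ ε / 2 := by
    have h1 : c * (∑ i ∈ Finset.range k, (1 - α) ^ i) ≤ c * (1 / α) :=
      mul_le_mul_of_nonneg_left hsum hc0
    have h2 : c * (1 / α) ≤ (α * ε / 2) * (1 / α) :=
      mul_le_mul_of_nonneg_right hcle (by positivity)
    have h3 : (α * ε / 2) * (1 / α) = ε / 2 := by field_simp
    linarith
  have hoF : oscOn (Tn Q (n - M) u) F ≤ 2 * D := oscOn_tn_le Q hu hD hFne _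
  have hoF0 : 0 ≤ oscOn (Tn Q (n - M) u) F := oscOn_tn_nonneg Q hu hD hFne _
  have hc2 : (1 - α) ^ k * oscOn (Tn Q (n - M) u) F ≤ ε / 2 := by
    have h1 : (1 - α) ^ k * oscOn (Tn Q (n - M) u) F ≤ (1 - α) ^ k * (2 * D + 1) := by
      nlinarith
    have h2 : (1 - α) ^ k * (2 * D + 1) ≤ ε / 2 := by
      rw [lt_div_iff₀ (by positivity)] at hk
      nlinarith
    linarith
  have hfin := hmain n hn u hu
  linarith

end Core

section Convergence

variable {K : Type*} [MetricSpace K] [MeasurableSpace K] [BorelSpace K]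

lemma tn_pointwise (Q : Kernel K K) [IsMarkovKernel Q] (hshrink : ShrinkingProperty Q)
    {D : ℝ} (hD : ∀ a b : K, dist a b ≤ D) {u : K → ℝ} (hu : MemLip u) (x y : K) :
    Tendsto (fun n => Tn Q n u x - Tn Q n u y) atTop (𝓝 0) := by
  obtain ⟨C, hC⟩ := hu.1
  obtain ⟨cl, hcl0, hcl⟩ := hu.2
  obtain ⟨c', hc'⟩ : ∃ c' : ℝ, c' = cl + 1 := ⟨_, rfl⟩
  have hc'0 : 0 < c' := by rw [hc']; linarith
  have hmem : MemLip1 (fun z => u z / c') := by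
    refine ⟨⟨C / c', fun z => ?_⟩, fun a b => ?_⟩
    · rw [abs_div, abs_of_pos hc'0]
      exact (div_le_div_iff_of_pos_right hc'0).2 (hC z)
    · have h1 : |u a - u b| ≤ cl * dist a b := hcl a b
      rw [div_sub_div_same, abs_div, abs_of_pos hc'0, div_le_iff₀ hc'0]
      nlinarith [dist_nonneg (x := a) (y := b), abs_nonneg (u a - u b)]
  have htne : ∀ n z, Tn Q n (fun w => u w / c') z = Tn Q n u z / c' := by
    intro n z
    simp only [Tn]
    rw [integral_div]
  rw [Metric.tendsto_atTop]
  intro ε hε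
  have hε2 : 0 < ε / (2 * c') := by positivity
  obtain ⟨M1, h1⟩ := core_estimate Q hshrink hD x y hε2
  obtain ⟨M2, h2⟩ := core_estimate Q hshrink hD y x hε2
  refine ⟨max M1 M2, fun n hn => ?_⟩
  have e1 := h1 n (le_trans (le_max_left _ _) hn) _ hmem
  have e2 := h2 n (le_trans (le_max_right _ _) hn) _ hmem
  rw [htne n x, htne n y] at e1 e2
  rw [Real.dist_eq, sub_zero]
  have habs : |Tn Q n u x / c' - Tn Q n u y / c'| ≤ ε / (2 * c') := by
    rw [abs_le]
    constructor <;> linarith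
  rw [div_sub_div_same, abs_div, abs_of_pos hc'0, div_le_div_iff₀ hc'0 (by positivity)] at habs
  have : |Tn Q n u x - Tn Q n u y| ≤ ε / 2 := by
    rw [le_div_iff₀ (by norm_num : (0:ℝ) < 2)]
    nlinarith
  linarith

lemma tn_tendsto_integral (Q : Kernel K K) [IsMarkovKernel Q] (hshrink : ShrinkingProperty Q)
    {D : ℝ} (hD : ∀ a b : K, dist a b ≤ D) (μ : Measure K) [IsProbabilityMeasure μ]
    (hbind : ∀ n, μ.bind (kiter Q n) = μ) {u : K → ℝ} (hu : MemLip u) (x : K) :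
    Tendsto (fun n => Tn Q n u x) atTop (𝓝 (∫ y, u y ∂μ)) := by
  obtain ⟨C, hC⟩ := hu.1
  have hmeas := hu.measurable
  have hTn_meas : ∀ n, Measurable (Tn Q n u) := fun n => tn_measurable Q n hmeas
  have hkey : ∀ n, ∫ z, (Tn Q n u x - Tn Q n u z) ∂μ = Tn Q n u x - ∫ y, u y ∂μ := by
    intro n
    rw [integral_sub (integrable_const _)
      (integrable_of_bounded (hTn_meas n) (fun z => tn_abs_le Q n hC z) μ),
      integral_const, integral_tn_eq Q n μ (hbind n) hmeas hC]
    simp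
  have hdom : Tendsto (fun n => ∫ z, (Tn Q n u x - Tn Q n u z) ∂μ) atTop
      (𝓝 (∫ (_ : K), (0:ℝ) ∂μ)) := by
    apply tendsto_integral_of_dominated_convergence (bound := fun _ => 2 * C)
    · exact fun n => (measurable_const.sub (hTn_meas n)).aestronglyMeasurable
    · exact integrable_const _
    · intro n
      refine Eventually.of_forall fun z => ?_
      rw [Real.norm_eq_abs]
      calc |Tn Q n u x - Tn Q n u z| ≤ |Tn Q n u x| + |Tn Q n u z| := abs_sub _ _
        _ ≤ 2 * C := by
            have hx := tn_abs_le Q n hC x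
            have hz := tn_abs_le Q n hC z
            linarith
    · exact Eventually.of_forall fun z => tn_pointwise Q hshrink hD hu x z
  rw [integral_zero] at hdom
  simp_rw [hkey] at hdom
  have hadd := hdom.add (tendsto_const_nhds (x := ∫ y, u y ∂μ))
  simpa using hadd

lemma pm_coe (ν : ProbabilityMeasure K) (s : Set K) :
    ((ν s : ℝ≥0) : ℝ) = ((ν : Measure K) s).toReal := by
  rw [← ENNReal.coe_toReal, ProbabilityMeasure.ennreal_coeFn_eq_coeFn_toMeasure]

lemma open_liminf (Q : Kernel K K) [IsMarkovKernel Q] (hshrink : ShrinkingProperty Q)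
    {D : ℝ} (hD : ∀ a b : K, dist a b ≤ D) (μ : Measure K) [IsProbabilityMeasure μ]
    (hbind : ∀ n, μ.bind (kiter Q n) = μ) (x : K) {G : Set K} (hG : IsOpen G)
    (μ' : ProbabilityMeasure K) (hμ' : (μ' : Measure K) = μ)
    (ν : ℕ → ProbabilityMeasure K) (hν : ∀ n, (ν n : Measure K) = kiter Q n x) :
    μ' G ≤ atTop.liminf (fun n => ν n G) := by
  by_cases hGu : G = Set.univ
  · subst hGu
    simp only [ProbabilityMeasure.coeFn_univ]
    rw [liminf_const]
  · have hGc : Gᶜ.Nonempty := Set.nonempty_compl.2 hGu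
    obtain ⟨f, hfdef⟩ : ∃ f : ℕ → K → ℝ,
        f = fun (k : ℕ) (z : K) => min 1 ((k : ℝ) * Metric.infDist z Gᶜ) := ⟨_, rfl⟩
    have hf_nonneg : ∀ k z, 0 ≤ f k z := by
      intro k z; rw [hfdef]
      exact le_min zero_le_one (mul_nonneg (Nat.cast_nonneg k) Metric.infDist_nonneg)
    have hf_le_one : ∀ k z, f k z ≤ 1 := by
      intro k z; rw [hfdef]; exact min_le_left _ _
    have hf_abs : ∀ k z, |f k z| ≤ 1 := fun k z =>
      abs_le.2 ⟨by linarith [hf_nonneg k z], hf_le_one k z⟩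
    have hf_memlip : ∀ k, MemLip (f k) := by
      intro k
      refine ⟨⟨1, hf_abs k⟩, ⟨(k : ℝ), Nat.cast_nonneg k, fun a b => ?_⟩⟩
      rw [hfdef]
      have h1 : |min 1 ((k : ℝ) * Metric.infDist a Gᶜ) - min 1 ((k : ℝ) * Metric.infDist b Gᶜ)|
          ≤ |(k : ℝ) * Metric.infDist a Gᶜ - (k : ℝ) * Metric.infDist b Gᶜ| :=
        abs_min_sub_min_le' _ _ _
      have h2 : |Metric.infDist a Gᶜ - Metric.infDist b Gᶜ| ≤ dist a b := by
        have := (Metric.lipschitz_infDist_pt (Gᶜ)).dist_le_mul a b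
        rwa [Real.dist_eq, NNReal.coe_one, one_mul] at this
      calc |min 1 ((k:ℝ) * Metric.infDist a Gᶜ) - min 1 ((k:ℝ) * Metric.infDist b Gᶜ)|
          ≤ |(k:ℝ) * Metric.infDist a Gᶜ - (k:ℝ) * Metric.infDist b Gᶜ| := h1
        _ = (k:ℝ) * |Metric.infDist a Gᶜ - Metric.infDist b Gᶜ| := by
            rw [← mul_sub, abs_mul, abs_of_nonneg (Nat.cast_nonneg k)]
        _ ≤ (k:ℝ) * dist a b := by
            exact mul_le_mul_of_nonneg_left h2 (Nat.cast_nonneg k)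
    have hf_le_ind : ∀ k z, f k z ≤ G.indicator 1 z := by
      intro k z
      by_cases hz : z ∈ G
      · rw [Set.indicator_of_mem hz]
        exact hf_le_one k z
      · rw [Set.indicator_of_notMem hz, hfdef]
        have h0 : Metric.infDist z Gᶜ = 0 := Metric.infDist_zero_of_mem (by simpa using hz)
        simp [h0]
    have hf_mono : ∀ z, Monotone (fun k => f k z) := by
      intro z k l hkl
      simp only [hfdef]
      exact min_le_min le_rfl
        (mul_le_mul_of_nonneg_right (Nat.cast_le.2 hkl) Metric.infDist_nonneg)
    have hf_tendsto : ∀ z, Tendsto (fun k => f k z) atTop (𝓝 (G.indicator 1 z)) := by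
      intro z
      by_cases hz : z ∈ G
      · rw [Set.indicator_of_mem hz, Pi.one_apply]
        have hd : 0 < Metric.infDist z Gᶜ :=
          (hG.isClosed_compl.notMem_iff_infDist_pos hGc).1 (by simpa using hz)
        obtain ⟨k0, hk0⟩ := exists_nat_ge (1 / Metric.infDist z Gᶜ)
        apply tendsto_atTop_of_eventually_const (i₀ := k0)
        intro k hk
        rw [hfdef]
        have hk' : 1 / Metric.infDist z Gᶜ ≤ (k : ℝ) := le_trans hk0 (Nat.cast_le.2 hk)
        have : (1:ℝ) ≤ (k : ℝ) * Metric.infDist z Gᶜ := by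
          rw [div_le_iff₀ hd] at hk'
          linarith
        simp [min_eq_left this]
      · rw [Set.indicator_of_notMem hz]
        have h0 : Metric.infDist z Gᶜ = 0 := Metric.infDist_zero_of_mem (by simpa using hz)
        have hzero : (fun k : ℕ => f k z) = fun _ => 0 := by
          funext k; rw [hfdef]; simp [h0]
        rw [hzero]
        exact tendsto_const_nhds
    have hfint : ∀ (k : ℕ) (ν : Measure K) [IsProbabilityMeasure ν], Integrable (f k) ν :=
      fun k ν _ => integrable_of_bounded (hf_memlip k).measurable (hf_abs k) ν
    have hindint : Integrable (G.indicator (1 : K → ℝ)) μ :=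
      (integrable_const (1:ℝ)).indicator hG.measurableSet
    have hstep1 : ∀ k, Tendsto (fun n => Tn Q n (f k) x) atTop (𝓝 (∫ z, f k z ∂μ)) :=
      fun k => tn_tendsto_integral Q hshrink hD μ hbind (hf_memlip k) x
    have hstep2 : ∀ k n, Tn Q n (f k) x ≤ ((kiter Q n x) G).toReal := by
      intro k n
      have hmono : Tn Q n (f k) x ≤ ∫ a, G.indicator (1 : K → ℝ) a ∂(kiter Q n x) :=
        integral_mono (μ := kiter Q n x) (hfint k _)
          ((integrable_const (1:ℝ)).indicator hG.measurableSet) (hf_le_ind k)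
      rwa [integral_indicator_one hG.measurableSet] at hmono
    have htoReal_le_one : ∀ n, ((kiter Q n x) G).toReal ≤ 1 := by
      intro n
      have h1 := ENNReal.toReal_mono (by simp : (1:ℝ≥0∞) ≠ ⊤) (prob_le_one (μ := kiter Q n x) (s := G))
      simpa using h1
    have hstep3 : ∀ k, (∫ z, f k z ∂μ) ≤
        atTop.liminf (fun n => ((kiter Q n x) G).toReal) := by
      intro k
      have h1 : atTop.liminf (fun n => Tn Q n (f k) x) = ∫ z, f k z ∂μ :=
        (hstep1 k).liminf_eq
      rw [← h1]
      refine liminf_le_liminf (Eventually.of_forall (hstep2 k)) ?_ ?_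
      · exact isBoundedUnder_of ⟨0, fun n => integral_nonneg (hf_nonneg k)⟩
      · exact IsBoundedUnder.isCoboundedUnder_ge
          (isBoundedUnder_of ⟨1, fun n => htoReal_le_one n⟩)
    have hstep4 : Tendsto (fun k => ∫ z, f k z ∂μ) atTop (𝓝 ((μ G).toReal)) := by
      have h := integral_tendsto_of_tendsto_of_monotone (μ := μ) (fun k => hfint k μ)
        hindint (Filter.Eventually.of_forall hf_mono) (Filter.Eventually.of_forall hf_tendsto)
      rwa [integral_indicator_one hG.measurableSet] at h
    have hstep5 : (μ G).toReal ≤ atTop.liminf (fun n => ((kiter Q n x) G).toReal) :=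
      le_of_tendsto hstep4 (Eventually.of_forall hstep3)
    -- transfer to ℝ≥0
    rw [le_liminf_iff
      (IsBoundedUnder.isCoboundedUnder_ge (isBoundedUnder_of
        ⟨1, fun n => ProbabilityMeasure.apply_le_one _ _⟩))
      (isBoundedUnder_of ⟨0, fun n => zero_le⟩)]
    intro b hb
    have hbR : (b : ℝ) < (μ G).toReal := by
      have h := NNReal.coe_lt_coe.2 hb
      rwa [pm_coe, hμ'] at h
    have hbL : (b : ℝ) < atTop.liminf (fun n => ((kiter Q n x) G).toReal) :=
      lt_of_lt_of_le hbR hstep5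
    have hev := eventually_lt_of_lt_liminf hbL
      (isBoundedUnder_of ⟨0, fun n => ENNReal.toReal_nonneg⟩)
    filter_upwards [hev] with n hn
    rw [← NNReal.coe_lt_coe, pm_coe, hν n]
    exact hn

end Convergence
/-- If `Q` is Lipschitz equicontinuous, has the shrinking property, and has an
invariant probability measure, then `Q` is weakly ergodic. -/
theorem stmt_2 {K : Type*} [MetricSpace K] [CompleteSpace K]
    [TopologicalSpace.SeparableSpace K] [MeasurableSpace K] [BorelSpace K]
    (hbdd : Bornology.IsBounded (Set.univ : Set K))
    (Q : Kernel K K) [IsMarkovKernel Q]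
    (hlip : LipEquicont Q) (hshrink : ShrinkingProperty Q)
    (μ : Measure K) (hprob : IsProbabilityMeasure μ)
    (hinv : ∀ E : Set K, MeasurableSet E → ∫⁻ x, Q x E ∂μ = μ E) :
    WeaklyErgodic Q := by
  obtain ⟨D, hD⟩ : ∃ D : ℝ, ∀ a b : K, dist a b ≤ D := by
    obtain ⟨C, hC⟩ := Metric.isBounded_iff.1 hbdd
    exact ⟨C, fun a b => hC (Set.mem_univ a) (Set.mem_univ b)⟩
  have hbind : ∀ n, μ.bind (kiter Q n) = μ := kiter_invariant Q hinv
  constructor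
  · -- weakly contracting
    intro x y
    rw [Metric.tendsto_atTop]
    intro ε hε
    obtain ⟨M, hM⟩ := core_estimate Q hshrink hD x y (half_pos hε)
    refine ⟨M, fun n hn => ?_⟩
    rw [Real.dist_eq, sub_zero]
    have hmem0 : (0 : ℝ) ∈ {d : ℝ | ∃ u : K → ℝ, MemLip1 u ∧ d = Tn Q n u x - Tn Q n u y} := by
      refine ⟨fun _ => (0:ℝ), ⟨⟨0, fun z => by simp⟩, fun a b => by simpa using dist_nonneg⟩, ?_⟩
      simp [Tn, integral_zero]
    have hub : ∀ d ∈ {d : ℝ | ∃ u : K → ℝ, MemLip1 u ∧ d = Tn Q n u x - Tn Q n u y},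
        d ≤ ε / 2 := by
      rintro d ⟨u, hu, rfl⟩
      exact hM n hn u hu
    have hS_le : sSup {d : ℝ | ∃ u : K → ℝ, MemLip1 u ∧ d = Tn Q n u x - Tn Q n u y} ≤ ε / 2 :=
      csSup_le ⟨0, hmem0⟩ hub
    have hS_ge : 0 ≤ sSup {d : ℝ | ∃ u : K → ℝ, MemLip1 u ∧ d = Tn Q n u x - Tn Q n u y} :=
      le_csSup ⟨ε / 2, hub⟩ hmem0
    rw [abs_of_nonneg hS_ge]
    linarith
  · refine ⟨μ, hprob, ?_⟩
    intro u hucont ⟨C, hC⟩ x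
    obtain ⟨ν, hν⟩ : ∃ ν : ℕ → ProbabilityMeasure K, ∀ n, (ν n : Measure K) = kiter Q n x :=
      ⟨fun n => ⟨kiter Q n x, inferInstance⟩, fun _ => rfl⟩
    obtain ⟨μ', hμ'⟩ : ∃ μ' : ProbabilityMeasure K, (μ' : Measure K) = μ := ⟨⟨μ, hprob⟩, rfl⟩
    have htend : Tendsto ν atTop (𝓝 μ') :=
      MeasureTheory.tendsto_of_forall_isOpen_le_liminf
        (fun G hG => open_liminf Q hshrink hD μ hbind x hG μ' hμ' ν hν)
    have hbc := ProbabilityMeasure.tendsto_iff_forall_integral_tendsto.mp htend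
      (BoundedContinuousFunction.ofNormedAddCommGroup u hucont C
        (fun z => by rw [Real.norm_eq_abs]; exact hC z))
    simp only [BoundedContinuousFunction.coe_ofNormedAddCommGroup, hν, hμ'] at hbc
    simpa [Tn] using hbc
end

section
/- Let r > 0 and let μ and ν be measures of total mass r on the space of measures on (S, 𝓕) such that μ-almost every and ν-almost every point is a probability measure absolutely continuous with respect to λ. Then every coupling μ̃ of μ and ν satisfies ∫ δ_TV(z₁, z₂) μ̃(dz₁, dz₂) ≥ δ_TV(b(μ), b(ν)); in particular the Kantorovich distance d_K(μ, ν), defined as the infimum of ∫ δ_TV(z₁, z₂) μ̃(dz₁, dz₂) over all couplings μ̃ of μ and ν, is at least δ_TV(b(μ), b(ν)). -/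
open MeasureTheory
open scoped NNReal ENNReal

/-- The total variation distance between two (finite) measures:
`δ_TV(z₁,z₂) = sup_F (z₁(F) − z₂(F)) + sup_F (z₂(F) − z₁(F))`, `F` measurable. -/
noncomputable def tvDist {S : Type*} [MeasurableSpace S] (z₁ z₂ : Measure S) : ℝ :=
  sSup {d : ℝ | ∃ F : Set S, MeasurableSet F ∧ d = (z₁ F).toReal - (z₂ F).toReal} +
    sSup {d : ℝ | ∃ F : Set S, MeasurableSet F ∧ d = (z₂ F).toReal - (z₁ F).toReal}

/-- The barycenter of a measure `μ` on the space of measures: `b(μ)(F) = ∫ z(F) μ(dz)`. -/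
noncomputable def bary {S : Type*} [MeasurableSpace S] (μ : Measure (Measure S)) : Measure S :=
  μ.bind id

section aux
variable {S : Type*} [MeasurableSpace S]

lemma tv_set_bddAbove (z₁ z₂ : Measure S) (h : z₁ Set.univ ≠ ⊤) :
    BddAbove {d : ℝ | ∃ F : Set S, MeasurableSet F ∧ d = (z₁ F).toReal - (z₂ F).toReal} := by
  refine ⟨(z₁ Set.univ).toReal, ?_⟩
  rintro d ⟨F, hF, rfl⟩
  have h1 : (z₁ F).toReal ≤ (z₁ Set.univ).toReal :=
    ENNReal.toReal_mono h (measure_mono (Set.subset_univ F))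
  have h2 : 0 ≤ (z₂ F).toReal := ENNReal.toReal_nonneg
  linarith

lemma le_tv_sSup (z₁ z₂ : Measure S) (h : z₁ Set.univ ≠ ⊤) {F : Set S} (hF : MeasurableSet F) :
    (z₁ F).toReal - (z₂ F).toReal ≤
      sSup {d : ℝ | ∃ F : Set S, MeasurableSet F ∧ d = (z₁ F).toReal - (z₂ F).toReal} :=
  le_csSup (tv_set_bddAbove z₁ z₂ h) ⟨F, hF, rfl⟩

lemma tv_sSup_nonneg (z₁ z₂ : Measure S) (h : z₁ Set.univ ≠ ⊤) :
    0 ≤ sSup {d : ℝ | ∃ F : Set S, MeasurableSet F ∧ d = (z₁ F).toReal - (z₂ F).toReal} := by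
  have := le_tv_sSup z₁ z₂ h MeasurableSet.empty
  simpa using this

end aux

/-- Every coupling `μ̃` of `μ` and `ν` satisfies
`∫ δ_TV(z₁,z₂) μ̃(dz₁,dz₂) ≥ δ_TV(b(μ), b(ν))`; in particular the Kantorovich distance
between `μ` and `ν` is at least `δ_TV(b(μ), b(ν))`. -/
theorem stmt_8 {S : Type*} [MetricSpace S] [CompleteSpace S]
    [TopologicalSpace.SeparableSpace S] [MeasurableSpace S] [BorelSpace S]
    (lam : Measure S) [SigmaFinite lam]
    (r : ℝ) (hr : 0 < r)
    (μ ν : Measure (Measure S))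
    (hμr : μ Set.univ = ENNReal.ofReal r) (hνr : ν Set.univ = ENNReal.ofReal r)
    (hμ : ∀ᵐ z ∂μ, IsProbabilityMeasure z ∧ z ≪ lam)
    (hν : ∀ᵐ z ∂ν, IsProbabilityMeasure z ∧ z ≪ lam) :
    (∀ μt : Measure (Measure S × Measure S),
        μt.map Prod.fst = μ → μt.map Prod.snd = ν →
          ENNReal.ofReal (tvDist (bary μ) (bary ν)) ≤
            ∫⁻ p, ENNReal.ofReal (tvDist p.1 p.2) ∂μt) ∧
      ENNReal.ofReal (tvDist (bary μ) (bary ν)) ≤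
        ⨅ (μt : Measure (Measure S × Measure S))
          (_ : μt.map Prod.fst = μ ∧ μt.map Prod.snd = ν),
          ∫⁻ p, ENNReal.ofReal (tvDist p.1 p.2) ∂μt := by
  -- barycenters are finite measures of mass r
  have hbμ : bary μ Set.univ ≠ ⊤ := by
    rw [bary, Measure.bind_apply MeasurableSet.univ measurable_id.aemeasurable]
    have : ∫⁻ z, (id z : Measure S) Set.univ ∂μ = ∫⁻ _, 1 ∂μ := by
      refine lintegral_congr_ae ?_
      filter_upwards [hμ] with z hz
      simp [hz.1.measure_univ]
    rw [this, lintegral_one, hμr]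
    exact ENNReal.ofReal_ne_top
  have hbν : bary ν Set.univ ≠ ⊤ := by
    rw [bary, Measure.bind_apply MeasurableSet.univ measurable_id.aemeasurable]
    have : ∫⁻ z, (id z : Measure S) Set.univ ∂ν = ∫⁻ _, 1 ∂ν := by
      refine lintegral_congr_ae ?_
      filter_upwards [hν] with z hz
      simp [hz.1.measure_univ]
    rw [this, lintegral_one, hνr]
    exact ENNReal.ofReal_ne_top
  have main : ∀ μt : Measure (Measure S × Measure S),
      μt.map Prod.fst = μ → μt.map Prod.snd = ν →
        ENNReal.ofReal (tvDist (bary μ) (bary ν)) ≤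
          ∫⁻ p, ENNReal.ofReal (tvDist p.1 p.2) ∂μt := by
    intro μt h1 h2
    have hμt_univ : μt Set.univ = ENNReal.ofReal r := by
      rw [← hμr, ← h1, Measure.map_apply measurable_fst MeasurableSet.univ, Set.preimage_univ]
    haveI : IsFiniteMeasure μt :=
      ⟨by rw [hμt_univ]; exact ENNReal.ofReal_lt_top⟩
    have hae1 : ∀ᵐ p ∂μt, IsProbabilityMeasure p.1 := by
      have := ae_of_ae_map (measurable_fst.aemeasurable (μ := μt)) (h1 ▸ hμ)
      filter_upwards [this] with p hp using hp.1
    have hae2 : ∀ᵐ p ∂μt, IsProbabilityMeasure p.2 := by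
      have := ae_of_ae_map (measurable_snd.aemeasurable (μ := μt)) (h2 ▸ hν)
      filter_upwards [this] with p hp using hp.1
    -- integrability of coordinate evaluations
    have int1 : ∀ F : Set S, MeasurableSet F →
        Integrable (fun p : Measure S × Measure S => (p.1 F).toReal) μt := by
      intro F hF
      refine Integrable.mono' (integrable_const (1 : ℝ))
        (((Measure.measurable_coe hF).comp measurable_fst).ennreal_toReal.aestronglyMeasurable) ?_
      filter_upwards [hae1] with p hp
      rw [Real.norm_eq_abs, abs_of_nonneg ENNReal.toReal_nonneg]
      have hle : p.1 F ≤ 1 := hp.measure_univ ▸ measure_mono (Set.subset_univ F)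
      simpa using ENNReal.toReal_mono ENNReal.one_ne_top hle
    have int2 : ∀ F : Set S, MeasurableSet F →
        Integrable (fun p : Measure S × Measure S => (p.2 F).toReal) μt := by
      intro F hF
      refine Integrable.mono' (integrable_const (1 : ℝ))
        (((Measure.measurable_coe hF).comp measurable_snd).ennreal_toReal.aestronglyMeasurable) ?_
      filter_upwards [hae2] with p hp
      rw [Real.norm_eq_abs, abs_of_nonneg ENNReal.toReal_nonneg]
      have hle : p.2 F ≤ 1 := hp.measure_univ ▸ measure_mono (Set.subset_univ F)
      simpa using ENNReal.toReal_mono ENNReal.one_ne_top hle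
    -- integrals of coordinate evaluations compute barycenters
    have key1 : ∀ F : Set S, MeasurableSet F →
        ∫ p, (p.1 F).toReal ∂μt = (bary μ F).toReal := by
      intro F hF
      have hm : Measurable fun z : Measure S => (z F).toReal :=
        (Measure.measurable_coe hF).ennreal_toReal
      have : ∫ p, (p.1 F).toReal ∂μt = ∫ z, (z F).toReal ∂μ := by
        rw [← h1, integral_map measurable_fst.aemeasurable hm.aestronglyMeasurable]
      rw [this, integral_toReal (Measure.measurable_coe hF).aemeasurable ?_,
        bary, Measure.bind_apply hF measurable_id.aemeasurable]
      · rfl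
      · filter_upwards [hμ] with z hz
        exact lt_of_le_of_lt (hz.1.measure_univ ▸ measure_mono (Set.subset_univ F))
          ENNReal.one_lt_top
    have key2 : ∀ F : Set S, MeasurableSet F →
        ∫ p, (p.2 F).toReal ∂μt = (bary ν F).toReal := by
      intro F hF
      have hm : Measurable fun z : Measure S => (z F).toReal :=
        (Measure.measurable_coe hF).ennreal_toReal
      have : ∫ p, (p.2 F).toReal ∂μt = ∫ z, (z F).toReal ∂ν := by
        rw [← h2, integral_map measurable_snd.aemeasurable hm.aestronglyMeasurable]
      rw [this, integral_toReal (Measure.measurable_coe hF).aemeasurable ?_,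
        bary, Measure.bind_apply hF measurable_id.aemeasurable]
      · rfl
      · filter_upwards [hν] with z hz
        exact lt_of_le_of_lt (hz.1.measure_univ ▸ measure_mono (Set.subset_univ F))
          ENNReal.one_lt_top
    refine ENNReal.le_of_forall_pos_le_add fun ε hε _ => ?_
    have hεR : (0 : ℝ) < (ε : ℝ) := hε
    -- choose near-optimal sets F, G
    obtain ⟨dF, ⟨F, hF, rfl⟩, hdF⟩ :=
      exists_lt_of_lt_csSup (s := {d : ℝ | ∃ F : Set S, MeasurableSet F ∧
          d = (bary μ F).toReal - (bary ν F).toReal}) ⟨0, ∅, MeasurableSet.empty, by simp⟩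
        (sub_lt_self _ (by positivity : (0:ℝ) < (ε : ℝ) / 2))
    obtain ⟨dG, ⟨G, hG, rfl⟩, hdG⟩ :=
      exists_lt_of_lt_csSup (s := {d : ℝ | ∃ F : Set S, MeasurableSet F ∧
          d = (bary ν F).toReal - (bary μ F).toReal}) ⟨0, ∅, MeasurableSet.empty, by simp⟩
        (sub_lt_self _ (by positivity : (0:ℝ) < (ε : ℝ) / 2))
    set g : Measure S × Measure S → ℝ := fun p =>
      ((p.1 F).toReal - (p.2 F).toReal) + ((p.2 G).toReal - (p.1 G).toReal) with hg_def
    have i12 : Integrable (fun p : Measure S × Measure S =>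
        (p.1 F).toReal - (p.2 F).toReal) μt := (int1 F hF).sub (int2 F hF)
    have i34 : Integrable (fun p : Measure S × Measure S =>
        (p.2 G).toReal - (p.1 G).toReal) μt := (int2 G hG).sub (int1 G hG)
    have hg_int : Integrable g μt := i12.add i34
    have hg_integral : ∫ p, g p ∂μt =
        ((bary μ F).toReal - (bary ν F).toReal) + ((bary ν G).toReal - (bary μ G).toReal) := by
      simp only [hg_def]
      rw [integral_add i12 i34, integral_sub (int1 F hF) (int2 F hF),
        integral_sub (int2 G hG) (int1 G hG), key1 F hF, key2 F hF, key1 G hG, key2 G hG]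
    set gp : Measure S × Measure S → ℝ := fun p => max (g p) 0 with hgp_def
    have hgp_int : Integrable gp μt := hg_int.pos_part
    have hgp_le : ∀ᵐ p ∂μt, gp p ≤ tvDist p.1 p.2 := by
      filter_upwards [hae1, hae2] with p hp1 hp2
      have h1top : p.1 Set.univ ≠ ⊤ := by simp [hp1.measure_univ]
      have h2top : p.2 Set.univ ≠ ⊤ := by simp [hp2.measure_univ]
      have t1 := le_tv_sSup p.1 p.2 h1top hF
      have t2 := le_tv_sSup p.2 p.1 h2top hG
      have n1 := tv_sSup_nonneg p.1 p.2 h1top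
      have n2 := tv_sSup_nonneg p.2 p.1 h2top
      have htv : tvDist p.1 p.2 =
          sSup {d : ℝ | ∃ F : Set S, MeasurableSet F ∧ d = (p.1 F).toReal - (p.2 F).toReal} +
            sSup {d : ℝ | ∃ F : Set S, MeasurableSet F ∧ d = (p.2 F).toReal - (p.1 F).toReal} :=
        rfl
      have hgpe : g p = ((p.1 F).toReal - (p.2 F).toReal) + ((p.2 G).toReal - (p.1 G).toReal) :=
        rfl
      have : gp p = max (g p) 0 := rfl
      rw [this, htv]
      exact max_le (by rw [hgpe]; linarith) (by linarith)
    have hsum : tvDist (bary μ) (bary ν) ≤ ∫ p, gp p ∂μt + (ε : ℝ) := by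
      have hgle : ∫ p, g p ∂μt ≤ ∫ p, gp p ∂μt :=
        integral_mono hg_int hgp_int fun p => le_max_left _ _
      have htv : tvDist (bary μ) (bary ν) =
          sSup {d : ℝ | ∃ F : Set S, MeasurableSet F ∧
              d = (bary μ F).toReal - (bary ν F).toReal} +
            sSup {d : ℝ | ∃ F : Set S, MeasurableSet F ∧
              d = (bary ν F).toReal - (bary μ F).toReal} := rfl
      rw [htv]
      linarith
    calc ENNReal.ofReal (tvDist (bary μ) (bary ν))
        ≤ ENNReal.ofReal (∫ p, gp p ∂μt + (ε : ℝ)) := ENNReal.ofReal_le_ofReal hsum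
      _ ≤ ENNReal.ofReal (∫ p, gp p ∂μt) + ENNReal.ofReal (ε : ℝ) := ENNReal.ofReal_add_le
      _ ≤ (∫⁻ p, ENNReal.ofReal (tvDist p.1 p.2) ∂μt) + ε := by
          gcongr
          · rw [ofReal_integral_eq_lintegral_ofReal hgp_int
              (Filter.Eventually.of_forall fun p => le_max_right _ _)]
            refine lintegral_mono_ae ?_
            filter_upwards [hgp_le] with p hp using ENNReal.ofReal_le_ofReal hp
          · rw [ENNReal.ofReal_coe_nnreal]
  exact ⟨main, le_iInf fun μt => le_iInf fun h => main μt h.1 h.2⟩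
end

section
/- Let N ≥ 1 be an integer, let ξ₁, …, ξ_N be probability measures on (S, 𝓕) absolutely continuous with respect to λ, let β₁, …, β_N > 0, let a = Σ_{k=1}^N β_k ξ_k, and let b be a finite nonnegative measure on (S, 𝓕), absolutely continuous with respect to λ, with b(S) = a(S). Then there exist probability measures ζ₁, …, ζ_N on (S, 𝓕), absolutely continuous with respect to λ, such that b = Σ_{k=1}^N β_k ζ_k and Σ_{k=1}^N β_k δ_TV(ξ_k, ζ_k) = δ_TV(a, b). -/
open MeasureTheory
open scoped NNReal ENNReal

lemma sSup_tv_aux {S : Type*} [MeasurableSpace S] (lam : Measure S)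
    (w r s : S → ℝ≥0∞) (hw : Measurable w)
    (A : Set S) (hA : MeasurableSet A)
    (hrA : ∀ x ∉ A, r x = 0) (hsA : ∀ x ∈ A, s x = 0)
    (hwf : ∫⁻ x, w x ∂lam ≠ ⊤) (hrf : ∫⁻ x, r x ∂lam ≠ ⊤) (hsf : ∫⁻ x, s x ∂lam ≠ ⊤) :
    sSup {d : ℝ | ∃ F : Set S, MeasurableSet F ∧
      d = ((lam.withDensity fun x => w x + r x) F).toReal
          - ((lam.withDensity fun x => w x + s x) F).toReal}
      = (∫⁻ x, r x ∂lam).toReal := by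
  have hfin : ∀ (u : S → ℝ≥0∞), (∫⁻ x, u x ∂lam ≠ ⊤) → ∀ F : Set S,
      ∫⁻ x in F, u x ∂lam ≠ ⊤ := fun u hu F =>
    ne_top_of_le_ne_top hu (setLIntegral_le_lintegral F u)
  have key : ∀ F : Set S, MeasurableSet F →
      ((lam.withDensity fun x => w x + r x) F).toReal
        - ((lam.withDensity fun x => w x + s x) F).toReal
      = (∫⁻ x in F, r x ∂lam).toReal - (∫⁻ x in F, s x ∂lam).toReal := by
    intro F hF
    rw [withDensity_apply _ hF, withDensity_apply _ hF,
      lintegral_add_left hw, lintegral_add_left hw,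
      ENNReal.toReal_add (hfin w hwf F) (hfin r hrf F),
      ENNReal.toReal_add (hfin w hwf F) (hfin s hsf F)]
    ring
  have ub : ∀ d ∈ {d : ℝ | ∃ F : Set S, MeasurableSet F ∧
      d = ((lam.withDensity fun x => w x + r x) F).toReal
          - ((lam.withDensity fun x => w x + s x) F).toReal},
      d ≤ (∫⁻ x, r x ∂lam).toReal := by
    rintro d ⟨F, hF, rfl⟩
    rw [key F hF]
    have h1 : (∫⁻ x in F, r x ∂lam).toReal ≤ (∫⁻ x, r x ∂lam).toReal :=
      ENNReal.toReal_mono hrf (setLIntegral_le_lintegral F r)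
    have h2 : 0 ≤ (∫⁻ x in F, s x ∂lam).toReal := ENNReal.toReal_nonneg
    linarith
  have mem : (∫⁻ x, r x ∂lam).toReal ∈ {d : ℝ | ∃ F : Set S, MeasurableSet F ∧
      d = ((lam.withDensity fun x => w x + r x) F).toReal
          - ((lam.withDensity fun x => w x + s x) F).toReal} := by
    refine ⟨A, hA, ?_⟩
    rw [key A hA]
    have h1 : ∫⁻ x in A, r x ∂lam = ∫⁻ x, r x ∂lam := by
      rw [← lintegral_indicator hA]
      congr 1
      funext x
      by_cases hx : x ∈ A
      · simp [Set.indicator_of_mem hx]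
      · simp [Set.indicator_of_notMem hx, hrA x hx]
    have h2 : ∫⁻ x in A, s x ∂lam = 0 := by
      rw [← lintegral_indicator hA]
      have : A.indicator s = fun _ => 0 := by
        funext x
        by_cases hx : x ∈ A
        · simp [Set.indicator_of_mem hx, hsA x hx]
        · simp [Set.indicator_of_notMem hx]
      rw [this]; simp
    rw [h1, h2]; simp
  exact le_antisymm (csSup_le ⟨_, mem⟩ ub) (le_csSup ⟨_, ub⟩ mem)

lemma tvDist_withDensity {S : Type*} [MeasurableSpace S] (lam : Measure S)
    (w r s : S → ℝ≥0∞) (hw : Measurable w)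
    (A : Set S) (hA : MeasurableSet A)
    (hrA : ∀ x ∉ A, r x = 0) (hsA : ∀ x ∈ A, s x = 0)
    (hwf : ∫⁻ x, w x ∂lam ≠ ⊤) (hrf : ∫⁻ x, r x ∂lam ≠ ⊤) (hsf : ∫⁻ x, s x ∂lam ≠ ⊤) :
    tvDist (lam.withDensity fun x => w x + r x) (lam.withDensity fun x => w x + s x)
      = (∫⁻ x, r x ∂lam).toReal + (∫⁻ x, s x ∂lam).toReal := by
  unfold tvDist
  rw [sSup_tv_aux lam w r s hw A hA hrA hsA hwf hrf hsf,
    sSup_tv_aux lam w s r hw Aᶜ hA.compl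
      (fun x hx => hsA x (by simpa using hx)) (fun x hx => hrA x (by simpa using hx))
      hwf hsf hrf]

/-- Given probability measures `ξ₁, …, ξ_N ≪ λ`, weights `β_k > 0`,
`a = Σ β_k ξ_k`, and a finite nonnegative measure `b ≪ λ` with `b(S) = a(S)`, there are
probability measures `ζ₁, …, ζ_N ≪ λ` with `b = Σ β_k ζ_k` and
`Σ β_k δ_TV(ξ_k, ζ_k) = δ_TV(a, b)`. -/
theorem stmt_9 {S : Type*} [MetricSpace S] [CompleteSpace S]
    [TopologicalSpace.SeparableSpace S] [MeasurableSpace S] [BorelSpace S]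
    (lam : Measure S) [SigmaFinite lam]
    (N : ℕ) (hN : 1 ≤ N)
    (ξ : Fin N → Measure S) (hξ : ∀ k, IsProbabilityMeasure (ξ k) ∧ ξ k ≪ lam)
    (β : Fin N → ℝ≥0) (hβ : ∀ k, 0 < β k)
    (b : Measure S) [IsFiniteMeasure b] (hbl : b ≪ lam)
    (hmass : b Set.univ = (∑ k, (β k : ℝ≥0∞) • ξ k) Set.univ) :
    ∃ ζ : Fin N → Measure S,
      (∀ k, IsProbabilityMeasure (ζ k) ∧ ζ k ≪ lam) ∧
        b = ∑ k, (β k : ℝ≥0∞) • ζ k ∧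
        ∑ k, (β k : ℝ) * tvDist (ξ k) (ζ k) = tvDist (∑ k, (β k : ℝ≥0∞) • ξ k) b := by
  classical
  -- truncated densities of ξ k
  set f : Fin N → S → ℝ≥0∞ :=
    fun k x => if (ξ k).rnDeriv lam x = ⊤ then 0 else (ξ k).rnDeriv lam x with hfdef
  have hfm : ∀ k, Measurable (f k) := fun k =>
    Measurable.ite ((Measure.measurable_rnDeriv _ _) (measurableSet_singleton ⊤))
      measurable_const (Measure.measurable_rnDeriv _ _)
  have hflt : ∀ k x, f k x ≠ ⊤ := by
    intro k x
    by_cases h : (ξ k).rnDeriv lam x = ⊤ <;> simp [hfdef, h]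
  have hxi : ∀ k, lam.withDensity (f k) = ξ k := by
    intro k
    haveI := (hξ k).1
    have hfae : f k =ᵐ[lam] (ξ k).rnDeriv lam := by
      filter_upwards [Measure.rnDeriv_lt_top (ξ k) lam] with x hx
      simp [hfdef, hx.ne]
    rw [withDensity_congr_ae hfae, Measure.withDensity_rnDeriv_eq _ _ (hξ k).2]
  -- density of b
  set g : S → ℝ≥0∞ := b.rnDeriv lam with hgdef
  have hgm : Measurable g := Measure.measurable_rnDeriv _ _
  have hb : lam.withDensity g = b := Measure.withDensity_rnDeriv_eq _ _ hbl
  -- h, m, p, q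
  set h : S → ℝ≥0∞ := fun x => ∑ k, (β k : ℝ≥0∞) * f k x with hhdef
  have hhm : Measurable h := Finset.measurable_sum _ fun k _ => (hfm k).const_mul _
  have hhlt : ∀ x, h x ≠ ⊤ := by
    intro x
    simp only [hhdef]
    rw [← lt_top_iff_ne_top]
    exact ENNReal.sum_lt_top.mpr fun k _ =>
      ENNReal.mul_lt_top ENNReal.coe_lt_top (lt_top_iff_ne_top.mpr (hflt k x))
  have hβf_le : ∀ k x, (β k : ℝ≥0∞) * f k x ≤ h x := fun k x =>
    Finset.single_le_sum (f := fun i => (β i : ℝ≥0∞) * f i x) (fun i _ => zero_le) (Finset.mem_univ k)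
  have hf_zero : ∀ k x, h x = 0 → f k x = 0 := by
    intro k x hx
    have := hβf_le k x
    rw [hx, le_zero_iff, mul_eq_zero] at this
    rcases this with h1 | h1
    · exact absurd h1 (by exact_mod_cast (hβ k).ne')
    · exact h1
  set m : S → ℝ≥0∞ := fun x => min (h x) (g x) with hmdef
  set p : S → ℝ≥0∞ := fun x => h x - m x with hpdef
  set q : S → ℝ≥0∞ := fun x => g x - m x with hqdef
  have hmm : Measurable m := hhm.min hgm
  have hpm : Measurable p := hhm.sub hmm
  have hqm : Measurable q := hgm.sub hmm
  have hmh : ∀ x, m x ≤ h x := fun x => min_le_left _ _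
  have hmg : ∀ x, m x ≤ g x := fun x => min_le_right _ _
  have hmlt : ∀ x, m x ≠ ⊤ := fun x => ne_top_of_le_ne_top (hhlt x) (hmh x)
  have hph : ∀ x, p x ≤ h x := fun x => tsub_le_self
  have hmp : ∀ x, m x + p x = h x := fun x => add_tsub_cancel_of_le (hmh x)
  have hmq : ∀ x, m x + q x = g x := fun x => add_tsub_cancel_of_le (hmg x)
  set A : Set S := {x | g x < h x} with hAdef
  have hA : MeasurableSet A := measurableSet_lt hgm hhm
  have hpA : ∀ x ∉ A, p x = 0 := by
    intro x hx
    have : h x ≤ g x := not_lt.mp hx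
    simp [hpdef, hmdef, min_eq_left this]
  have hqA : ∀ x ∈ A, q x = 0 := by
    intro x hx
    have : g x ≤ h x := le_of_lt hx
    simp [hqdef, hmdef, min_eq_right this]
  -- mass facts
  have hIf : ∀ k, ∫⁻ x, f k x ∂lam = 1 := by
    intro k
    haveI := (hξ k).1
    have := congrArg (fun μ : Measure S => μ Set.univ) (hxi k)
    simpa [withDensity_apply _ MeasurableSet.univ] using this
  set B : ℝ≥0∞ := ∑ k, (β k : ℝ≥0∞) with hBdef
  have hBt : B ≠ ⊤ := by
    rw [← lt_top_iff_ne_top, hBdef]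
    exact ENNReal.sum_lt_top.mpr fun k _ => ENNReal.coe_lt_top
  have hB0 : B ≠ 0 := by
    intro hc
    have k0 : Fin N := ⟨0, hN⟩
    have := Finset.sum_eq_zero_iff_of_nonneg (fun i _ => zero_le) |>.mp hc k0 (Finset.mem_univ k0)
    exact absurd (by exact_mod_cast this) (hβ k0).ne'
  have hIh : ∫⁻ x, h x ∂lam = B := by
    rw [hhdef]
    rw [lintegral_finset_sum _ fun k _ => (hfm k).const_mul _]
    simp only [lintegral_const_mul _ (hfm _), hIf, mul_one]
    exact hBdef.symm
  have hIg : ∫⁻ x, g x ∂lam = B := by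
    have h1 : ∫⁻ x, g x ∂lam = b Set.univ := by
      rw [← hb, withDensity_apply _ MeasurableSet.univ, Measure.restrict_univ]
    rw [h1, hmass, Measure.finset_sum_apply]
    simp only [Measure.smul_apply, smul_eq_mul]
    congr 1
    funext k
    haveI := (hξ k).1
    simp
  have hIm_ne : ∫⁻ x, m x ∂lam ≠ ⊤ := by
    refine ne_top_of_le_ne_top (hIh ▸ hBt) (lintegral_mono fun x => hmh x)
  set ε : ℝ≥0∞ := ∫⁻ x, p x ∂lam with hεdef
  have hIp : ε = B - ∫⁻ x, m x ∂lam := by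
    rw [hεdef, hpdef]
    rw [lintegral_sub hmm hIm_ne (Filter.Eventually.of_forall hmh), hIh]
  have hIq : ∫⁻ x, q x ∂lam = ε := by
    rw [hqdef, lintegral_sub hmm hIm_ne (Filter.Eventually.of_forall hmg), hIg, hIp]
  have hεt : ε ≠ ⊤ := by
    rw [hIp]
    exact ne_top_of_le_ne_top hBt tsub_le_self
  -- the split of f k
  set π : Fin N → S → ℝ≥0∞ := fun k x => f k x * (p x / h x) with hπdef
  set μ : Fin N → S → ℝ≥0∞ := fun k x => f k x * (m x / h x) with hμdef
  have hπm : ∀ k, Measurable (π k) := fun k => (hfm k).mul (hpm.div hhm)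
  have hμm : ∀ k, Measurable (μ k) := fun k => (hfm k).mul (hmm.div hhm)
  have hμπ : ∀ k x, μ k x + π k x = f k x := by
    intro k x
    by_cases hh : h x = 0
    · simp [hμdef, hπdef, hf_zero k x hh]
    · rw [hμdef, hπdef]
      simp only
      rw [← mul_add, ENNReal.div_add_div_same, hmp, ENNReal.div_self hh (hhlt x), mul_one]
  have hπ_le : ∀ k x, π k x ≤ f k x := by
    intro k x
    calc f k x * (p x / h x) ≤ f k x * (h x / h x) :=
          mul_le_mul_right (ENNReal.div_le_div_right (hph x) _) _
      _ ≤ f k x * 1 := mul_le_mul_right ENNReal.div_self_le_one _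
      _ = f k x := mul_one _
  have hμ_le : ∀ k x, μ k x ≤ f k x := by
    intro k x
    calc f k x * (m x / h x) ≤ f k x * (h x / h x) :=
          mul_le_mul_right (ENNReal.div_le_div_right (hmh x) _) _
      _ ≤ f k x * 1 := mul_le_mul_right ENNReal.div_self_le_one _
      _ = f k x := mul_one _
  have hIπ_le : ∀ k, ∫⁻ x, π k x ∂lam ≤ 1 := fun k =>
    (hIf k) ▸ lintegral_mono fun x => hπ_le k x
  have hIμ_le : ∀ k, ∫⁻ x, μ k x ∂lam ≤ 1 := fun k =>
    (hIf k) ▸ lintegral_mono fun x => hμ_le k x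
  have hIπ_ne : ∀ k, ∫⁻ x, π k x ∂lam ≠ ⊤ := fun k => ne_top_of_le_ne_top ENNReal.one_ne_top (hIπ_le k)
  have hIμ_ne : ∀ k, ∫⁻ x, μ k x ∂lam ≠ ⊤ := fun k => ne_top_of_le_ne_top ENNReal.one_ne_top (hIμ_le k)
  have hsum_gen : ∀ (u : S → ℝ≥0∞), (∀ x, u x ≤ h x) →
      ∀ x, ∑ k, (β k : ℝ≥0∞) * (f k x * (u x / h x)) = u x := by
    intro u hu x
    have e1 : ∑ k, (β k : ℝ≥0∞) * (f k x * (u x / h x))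
        = (∑ k, (β k : ℝ≥0∞) * f k x) * (u x / h x) := by
      rw [Finset.sum_mul]
      exact Finset.sum_congr rfl fun k _ => (mul_assoc _ _ _).symm
    have e2 : (∑ k, (β k : ℝ≥0∞) * f k x) = h x := rfl
    rw [e1, e2]
    by_cases hh : h x = 0
    · have hu0 : u x = 0 := le_zero_iff.mp (hh ▸ hu x)
      rw [hh, hu0, zero_mul]
    · exact ENNReal.mul_div_cancel hh (hhlt x)
  have hsumμ : ∀ x, ∑ k, (β k : ℝ≥0∞) * μ k x = m x := fun x => hsum_gen m hmh x
  have hsumπ : ∀ x, ∑ k, (β k : ℝ≥0∞) * π k x = p x := fun x => hsum_gen p hph x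
  set t : Fin N → ℝ≥0∞ := fun k => ∫⁻ x, π k x ∂lam with htdef
  have hsum_t : ∑ k, (β k : ℝ≥0∞) * t k = ε := by
    calc ∑ k, (β k : ℝ≥0∞) * t k
        = ∑ k, ∫⁻ x, (β k : ℝ≥0∞) * π k x ∂lam :=
          Finset.sum_congr rfl fun k _ => (lintegral_const_mul _ (hπm k)).symm
      _ = ∫⁻ x, ∑ k, (β k : ℝ≥0∞) * π k x ∂lam :=
          (lintegral_finset_sum _ fun k _ => (hπm k).const_mul _).symm
      _ = ∫⁻ x, p x ∂lam := lintegral_congr fun x => hsumπ x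
      _ = ε := hεdef.symm
  set c : Fin N → ℝ≥0∞ := fun k => if ε = 0 then B⁻¹ else t k / ε with hcdef
  have htε : ∀ k, ε = 0 → t k = 0 := by
    intro k hε
    have h1 : (β k : ℝ≥0∞) * t k ≤ ε := hsum_t ▸
      Finset.single_le_sum (f := fun i => (β i : ℝ≥0∞) * t i) (fun i _ => zero_le)
        (Finset.mem_univ k)
    rw [hε, le_zero_iff, mul_eq_zero] at h1
    rcases h1 with h1 | h1
    · exact absurd h1 (by exact_mod_cast (hβ k).ne')
    · exact h1
  have hcε : ∀ k, c k * ε = t k := by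
    intro k
    by_cases hε : ε = 0
    · rw [hε, mul_zero, htε k hε]
    · simp only [hcdef, if_neg hε]
      exact ENNReal.div_mul_cancel hε hεt
  have hsum_c : ∑ k, (β k : ℝ≥0∞) * c k = 1 := by
    by_cases hε : ε = 0
    · simp only [hcdef, if_pos hε]
      rw [← Finset.sum_mul]
      exact ENNReal.mul_inv_cancel hB0 hBt
    · simp only [hcdef, if_neg hε, div_eq_mul_inv]
      calc ∑ k, (β k : ℝ≥0∞) * (t k * ε⁻¹)
          = ∑ k, ((β k : ℝ≥0∞) * t k) * ε⁻¹ :=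
            Finset.sum_congr rfl fun k _ => (mul_assoc _ _ _).symm
        _ = (∑ k, (β k : ℝ≥0∞) * t k) * ε⁻¹ := (Finset.sum_mul _ _ _).symm
        _ = ε * ε⁻¹ := by rw [hsum_t]
        _ = 1 := ENNReal.mul_inv_cancel hε hεt
  set ρ : Fin N → S → ℝ≥0∞ := fun k x => μ k x + c k * q x with hρdef
  have hρm : ∀ k, Measurable (ρ k) := fun k => (hμm k).add (hqm.const_mul _)
  have hIcq : ∀ k, ∫⁻ x, c k * q x ∂lam = t k := by
    intro k
    rw [lintegral_const_mul _ hqm, hIq, hcε]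
  have hIμπ : ∀ k, ∫⁻ x, μ k x ∂lam + t k = 1 := by
    intro k
    rw [htdef]
    rw [← lintegral_add_left (hμm k)]
    rw [← hIf k]
    exact lintegral_congr fun x => hμπ k x
  have hIρ : ∀ k, ∫⁻ x, ρ k x ∂lam = 1 := by
    intro k
    simp only [hρdef]
    rw [lintegral_add_left (hμm k), hIcq, hIμπ]
  have hρg : ∀ x, ∑ k, (β k : ℝ≥0∞) * ρ k x = g x := by
    intro x
    have e1 : ∑ k, (β k : ℝ≥0∞) * ρ k x
        = ∑ k, ((β k : ℝ≥0∞) * μ k x + ((β k : ℝ≥0∞) * c k) * q x) := by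
      refine Finset.sum_congr rfl fun k _ => ?_
      simp only [hρdef]
      ring
    rw [e1, Finset.sum_add_distrib, hsumμ, ← Finset.sum_mul, hsum_c, one_mul, hmq]
  refine ⟨fun k => lam.withDensity (ρ k), fun k => ⟨⟨?_⟩, withDensity_absolutelyContinuous _ _⟩,
    ?_, ?_⟩
  · rw [withDensity_apply _ MeasurableSet.univ, Measure.restrict_univ, hIρ]
  · ext F hF
    rw [Measure.finset_sum_apply]
    simp only [Measure.smul_apply, smul_eq_mul, withDensity_apply _ hF]
    calc b F = ∫⁻ x in F, g x ∂lam := by rw [← hb, withDensity_apply _ hF]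
      _ = ∫⁻ x in F, ∑ k, (β k : ℝ≥0∞) * ρ k x ∂lam :=
          lintegral_congr fun x => (hρg x).symm
      _ = ∑ k, ∫⁻ x in F, (β k : ℝ≥0∞) * ρ k x ∂lam :=
          lintegral_finset_sum _ fun k _ => (hρm k).const_mul _
      _ = ∑ k, (β k : ℝ≥0∞) * ∫⁻ x in F, ρ k x ∂lam :=
          Finset.sum_congr rfl fun k _ => lintegral_const_mul _ (hρm k)
  · -- TV distance identity
    have hξd : ∀ k, ξ k = lam.withDensity fun x => μ k x + π k x := by
      intro k
      rw [← hxi k]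
      exact withDensity_congr_ae (Filter.Eventually.of_forall fun x => (hμπ k x).symm)
    have hπA : ∀ k, ∀ x ∉ A, π k x = 0 := by
      intro k x hx
      simp only [hπdef]
      rw [hpA x hx, ENNReal.zero_div, mul_zero]
    have hIπ_ne' : ∀ k, t k ≠ ⊤ := hIπ_ne
    have htv1 : ∀ k, tvDist (ξ k) (lam.withDensity (ρ k)) = (t k).toReal + (t k).toReal := by
      intro k
      rw [hξd k]
      have hrw : lam.withDensity (ρ k) = lam.withDensity fun x => μ k x + c k * q x := rfl
      rw [hrw]
      rw [tvDist_withDensity lam (μ k) (π k) (fun x => c k * q x) (hμm k) A hA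
        (hπA k) (fun x hx => by show c k * q x = 0; rw [hqA x hx, mul_zero])
        (hIμ_ne k) (hIπ_ne k) (by rw [hIcq k]; exact hIπ_ne' k)]
      rw [show (∫⁻ x, (fun x => c k * q x) x ∂lam) = t k from hIcq k,
        show (∫⁻ x, π k x ∂lam) = t k from rfl]
    have ha : (∑ k, (β k : ℝ≥0∞) • ξ k) = lam.withDensity fun x => m x + p x := by
      ext F hF
      rw [Measure.finset_sum_apply, withDensity_apply _ hF]
      calc ∑ k, ((β k : ℝ≥0∞) • ξ k) F
          = ∑ k, (β k : ℝ≥0∞) * ∫⁻ x in F, f k x ∂lam := by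
            refine Finset.sum_congr rfl fun k _ => ?_
            rw [Measure.smul_apply, smul_eq_mul, ← hxi k, withDensity_apply _ hF]
        _ = ∑ k, ∫⁻ x in F, (β k : ℝ≥0∞) * f k x ∂lam :=
            Finset.sum_congr rfl fun k _ => (lintegral_const_mul _ (hfm k)).symm
        _ = ∫⁻ x in F, ∑ k, (β k : ℝ≥0∞) * f k x ∂lam :=
            (lintegral_finset_sum _ fun k _ => (hfm k).const_mul _).symm
        _ = ∫⁻ x in F, m x + p x ∂lam := lintegral_congr fun x => (hmp x).symm
    have hbd : b = lam.withDensity fun x => m x + q x := by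
      rw [← hb]
      exact withDensity_congr_ae (Filter.Eventually.of_forall fun x => (hmq x).symm)
    have hεp : ∫⁻ x, p x ∂lam ≠ ⊤ := hεdef ▸ hεt
    have hεq : ∫⁻ x, q x ∂lam ≠ ⊤ := by rw [hIq]; exact hεt
    have htv2 : tvDist (∑ k, (β k : ℝ≥0∞) • ξ k) b = ε.toReal + ε.toReal := by
      rw [ha, hbd,
        tvDist_withDensity lam m p q hmm A hA hpA hqA hIm_ne hεp hεq,
        ← hεdef, hIq]
    rw [htv2]
    have hβt_ne : ∀ k, (β k : ℝ≥0∞) * t k ≠ ⊤ := fun k =>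
      ENNReal.mul_ne_top ENNReal.coe_ne_top (hIπ_ne' k)
    calc ∑ k, (β k : ℝ) * tvDist (ξ k) (lam.withDensity (ρ k))
        = ∑ k, (((β k : ℝ≥0∞) * t k).toReal + ((β k : ℝ≥0∞) * t k).toReal) := by
          refine Finset.sum_congr rfl fun k _ => ?_
          rw [htv1 k, ENNReal.toReal_mul, ENNReal.coe_toReal]
          ring
      _ = (∑ k, (β k : ℝ≥0∞) * t k).toReal + (∑ k, (β k : ℝ≥0∞) * t k).toReal := by
          rw [Finset.sum_add_distrib, ← ENNReal.toReal_sum (fun k _ => hβt_ne k)]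
      _ = ε.toReal + ε.toReal := by rw [hsum_t]
end
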